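/- Suppose the partitioned Jacobian J = (J_μ J_{κu}) satisfies rank(J_μ) + rank(J_{κu}) = rank(J). Let H = JᵀJ with blocks H_{μμ}, H_{μ,κu}, H_{κu,κu}, and S = H_{κu,κu} − H_{κu,μ}H_{μμ}⁺H_{μ,κu}. Then for b = Jᵀr, the (κ,u)-components of the minimum-norm solution −H⁺b coincide with −S⁺(b_{κu} − H_{κu,μ}H_{μμ}⁺b_μ). -/

import Mathlib

open Matrix

/-- The four Penrose conditions characterizing the Moore–Penrose pseudo-inverse. -/
def IsMoorePenrose {m n : Type*} [Fintype m] [Fintype n]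
    (A : Matrix m n ℝ) (P : Matrix n m ℝ) : Prop :=
  A * P * A = A ∧ P * A * P = P ∧ (A * P)ᵀ = A * P ∧ (P * A)ᵀ = P * A

section Aux

variable {m n : Type*} [Fintype m] [Fintype n]

/-- Uniqueness of the Moore–Penrose pseudo-inverse. -/
lemma mp_unique {A : Matrix m n ℝ} {P Q : Matrix n m ℝ}
    (hP : IsMoorePenrose A P) (hQ : IsMoorePenrose A Q) : P = Q := by
  obtain ⟨hP1, hP2, hP3, hP4⟩ := hP
  obtain ⟨hQ1, hQ2, hQ3, hQ4⟩ := hQ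
  have hAt : Aᵀ = Aᵀ * (A * Q) := by
    conv_lhs => rw [← hQ1]
    rw [transpose_mul, hQ3]
  have hAP : A * P = A * Q := by
    calc A * P = (A * P)ᵀ := hP3.symm
    _ = Pᵀ * Aᵀ := transpose_mul _ _
    _ = Pᵀ * (Aᵀ * (A * Q)) := by rw [← hAt]
    _ = (Pᵀ * Aᵀ) * (A * Q) := by rw [Matrix.mul_assoc]
    _ = (A * P)ᵀ * (A * Q) := by rw [transpose_mul]
    _ = (A * P) * (A * Q) := by rw [hP3]
    _ = A * P * A * Q := by rw [← Matrix.mul_assoc]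
    _ = A * Q := by rw [hP1]
  have hAt2 : Aᵀ = (Q * A) * Aᵀ := by
    conv_lhs => rw [← hQ1]
    rw [Matrix.mul_assoc, transpose_mul, hQ4]
  have hPA : P * A = Q * A := by
    calc P * A = (P * A)ᵀ := hP4.symm
    _ = Aᵀ * Pᵀ := transpose_mul _ _
    _ = ((Q * A) * Aᵀ) * Pᵀ := by rw [← hAt2]
    _ = (Q * A) * (Aᵀ * Pᵀ) := Matrix.mul_assoc _ _ _
    _ = (Q * A) * (P * A)ᵀ := by rw [transpose_mul]
    _ = (Q * A) * (P * A) := by rw [hP4]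
    _ = Q * (A * P * A) := by rw [Matrix.mul_assoc, Matrix.mul_assoc]
    _ = Q * A := by rw [hP1]
  calc P = P * A * P := hP2.symm
  _ = Q * A * P := by rw [hPA]
  _ = Q * (A * P) := Matrix.mul_assoc _ _ _
  _ = Q * (A * Q) := by rw [hAP]
  _ = Q * A * Q := (Matrix.mul_assoc _ _ _).symm
  _ = Q := hQ2

lemma mp_transpose {A : Matrix m n ℝ} {P : Matrix n m ℝ}
    (h : IsMoorePenrose A P) : IsMoorePenrose Aᵀ Pᵀ := by
  obtain ⟨h1, h2, h3, h4⟩ := h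
  refine ⟨?_, ?_, ?_, ?_⟩
  · rw [← transpose_mul, ← transpose_mul, ← Matrix.mul_assoc, h1]
  · rw [← transpose_mul, ← transpose_mul, ← Matrix.mul_assoc, h2]
  · rw [← transpose_mul, transpose_transpose, h4]
  · rw [← transpose_mul, transpose_transpose, h3]

/-- The pseudo-inverse of a symmetric matrix is symmetric. -/
lemma mp_symm {A P : Matrix n n ℝ} (hA : Aᵀ = A)
    (h : IsMoorePenrose A P) : Pᵀ = P := by
  have h' : IsMoorePenrose A Pᵀ := by
    have := mp_transpose h
    rwa [hA] at this
  exact mp_unique h' h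

lemma transpose_mul_self_eq_zero' {A : Matrix m n ℝ} (h : Aᵀ * A = 0) : A = 0 := by
  have hA : Aᴴ = Aᵀ := by ext i j; simp [conjTranspose_apply]
  rw [← hA] at h
  exact conjTranspose_mul_self_eq_zero.mp h

/-- If `P` satisfies the Penrose conditions for `JᵀJ`, then `J (P (JᵀJ)) = J`. -/
lemma key1 (J : Matrix m n ℝ) (P : Matrix n n ℝ)
    (hP : IsMoorePenrose (Jᵀ * J) P) : J * (P * (Jᵀ * J)) = J := by
  obtain ⟨h1, h2, h3, h4⟩ := hP
  set D := J - J * (P * (Jᵀ * J)) with hD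
  have hJD : Jᵀ * D = 0 := by
    rw [hD, Matrix.mul_sub, ← Matrix.mul_assoc, ← Matrix.mul_assoc, h1, sub_self]
  have hz : Dᵀ * D = 0 := by
    have hDt : Dᵀ = Jᵀ - (P * (Jᵀ * J))ᵀ * Jᵀ := by
      rw [hD, transpose_sub, transpose_mul]
    rw [hDt, Matrix.sub_mul, hJD, Matrix.mul_assoc, hJD, Matrix.mul_zero, sub_self]
  have hD0 : D = 0 := transpose_mul_self_eq_zero' hz
  exact (sub_eq_zero.mp hD0).symm

/-- Rank additivity implies the column spaces intersect trivially. -/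
lemma disjoint_ranges {N n1 n2 : ℕ}
    (A : Matrix (Fin N) (Fin n1) ℝ) (B : Matrix (Fin N) (Fin n2) ℝ)
    (hrank : A.rank + B.rank = (fromCols A B).rank) :
    ∀ v : Fin N → ℝ, v ∈ LinearMap.range A.mulVecLin →
      v ∈ LinearMap.range B.mulVecLin → v = 0 := by
  have hr : LinearMap.range (fromCols A B).mulVecLin =
      LinearMap.range A.mulVecLin ⊔ LinearMap.range B.mulVecLin := by
    apply le_antisymm
    · rintro v ⟨x, rfl⟩
      have hx : x = Sum.elim (x ∘ Sum.inl) (x ∘ Sum.inr) := by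
        funext i; cases i <;> rfl
      rw [Matrix.mulVecLin_apply, hx, fromCols_mulVec_sumElim]
      exact Submodule.add_mem_sup ⟨_, rfl⟩ ⟨_, rfl⟩
    · rw [sup_le_iff]
      constructor <;> rintro v ⟨x, rfl⟩
      · exact ⟨Sum.elim x 0, by
          simp [Matrix.mulVecLin_apply, fromCols_mulVec_sumElim]⟩
      · exact ⟨Sum.elim 0 x, by
          simp [Matrix.mulVecLin_apply, fromCols_mulVec_sumElim]⟩
  have hfin := Submodule.finrank_sup_add_finrank_inf_eq
    (LinearMap.range A.mulVecLin) (LinearMap.range B.mulVecLin)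
  unfold Matrix.rank at hrank
  rw [hr] at hrank
  have h0 : Module.finrank ℝ
      ↥(LinearMap.range A.mulVecLin ⊓ LinearMap.range B.mulVecLin) = 0 := by
    omega
  have hbot : LinearMap.range A.mulVecLin ⊓ LinearMap.range B.mulVecLin = ⊥ :=
    Submodule.finrank_eq_zero.mp h0
  intro v h1 h2
  have : v ∈ LinearMap.range A.mulVecLin ⊓ LinearMap.range B.mulVecLin := ⟨h1, h2⟩
  rw [hbot] at this
  simpa using this

/-- The Banachiewicz–Schur block form satisfies the Penrose conditions. -/
lemma blockMP {n1 n2 : Type*} [Fintype n1] [Fintype n2] [DecidableEq n1] [DecidableEq n2]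
    (A : Matrix n1 n1 ℝ) (B : Matrix n1 n2 ℝ) (C : Matrix n2 n2 ℝ)
    (P : Matrix n1 n1 ℝ) (Q : Matrix n2 n2 ℝ) (S : Matrix n2 n2 ℝ)
    (hA : Aᵀ = A) (hC : Cᵀ = C) (hP : Pᵀ = P) (hQ : Qᵀ = Q)
    (hS : S = C - Bᵀ * P * B)
    (g1 : A * P * A = A) (g2 : P * A * P = P) (p3 : (A * P)ᵀ = A * P)
    (g4 : A * P * B = B)
    (g6 : S * Q * S = S) (g7 : Q * S * Q = Q) (q3 : (S * Q)ᵀ = S * Q)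
    (g9 : S * Q * Bᵀ = Bᵀ) :
    IsMoorePenrose (fromBlocks A B Bᵀ C)
      (fromBlocks (P + P * B * Q * Bᵀ * P) (-(P * B * Q)) (-(Q * Bᵀ * P)) Q) := by
  have hC' : C = S + Bᵀ * P * B := by rw [hS, sub_add_cancel]
  have hSym : Sᵀ = S := by
    rw [hS]
    simp only [transpose_sub, transpose_mul, transpose_transpose, hP, hC, Matrix.mul_assoc]
  have cP : A * P = P * A := by
    conv_lhs => rw [← p3]
    rw [transpose_mul, hP, hA]
  have cQ : S * Q = Q * S := by
    conv_lhs => rw [← q3]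
    rw [transpose_mul, hQ, hSym]
  have hHM : fromBlocks A B Bᵀ C *
      fromBlocks (P + P * B * Q * Bᵀ * P) (-(P * B * Q)) (-(Q * Bᵀ * P)) Q
      = fromBlocks (A * P) 0 0 (S * Q) := by
    rw [fromBlocks_multiply]
    have e11 : A * (P + P * B * Q * Bᵀ * P) + B * -(Q * Bᵀ * P) = A * P := by
      simp only [Matrix.mul_add, Matrix.mul_neg, ← Matrix.mul_assoc, g4]
      abel
    have e12 : A * -(P * B * Q) + B * Q = 0 := by
      simp only [Matrix.mul_neg, ← Matrix.mul_assoc, g4]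
      abel
    have e21 : Bᵀ * (P + P * B * Q * Bᵀ * P) + C * -(Q * Bᵀ * P) = 0 := by
      rw [hC']
      simp only [Matrix.mul_add, Matrix.add_mul, Matrix.mul_neg, ← Matrix.mul_assoc, g9]
      abel
    have e22 : Bᵀ * -(P * B * Q) + C * Q = S * Q := by
      rw [hC']
      simp only [Matrix.mul_neg, Matrix.add_mul, ← Matrix.mul_assoc]
      abel
    rw [e11, e12, e21, e22]
  have hHs : (fromBlocks A B Bᵀ C)ᵀ = fromBlocks A B Bᵀ C := by
    rw [fromBlocks_transpose, hA, hC, transpose_transpose]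
  have hMs : (fromBlocks (P + P * B * Q * Bᵀ * P) (-(P * B * Q)) (-(Q * Bᵀ * P)) Q)ᵀ
      = fromBlocks (P + P * B * Q * Bᵀ * P) (-(P * B * Q)) (-(Q * Bᵀ * P)) Q := by
    rw [fromBlocks_transpose]
    have t11 : (P + P * B * Q * Bᵀ * P)ᵀ = P + P * B * Q * Bᵀ * P := by
      simp only [transpose_add, transpose_mul, transpose_transpose, hP, hQ,
        Matrix.mul_assoc]
    have t12 : (-(Q * Bᵀ * P))ᵀ = -(P * B * Q) := by
      simp only [transpose_neg, transpose_mul, transpose_transpose, hP, hQ,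
        Matrix.mul_assoc]
    have t21 : (-(P * B * Q))ᵀ = -(Q * Bᵀ * P) := by
      simp only [transpose_neg, transpose_mul, transpose_transpose, hP, hQ,
        Matrix.mul_assoc]
    rw [t11, t12, t21, hQ]
  have hMH : fromBlocks (P + P * B * Q * Bᵀ * P) (-(P * B * Q)) (-(Q * Bᵀ * P)) Q *
      fromBlocks A B Bᵀ C = fromBlocks (A * P) 0 0 (S * Q) := by
    calc fromBlocks (P + P * B * Q * Bᵀ * P) (-(P * B * Q)) (-(Q * Bᵀ * P)) Q *
        fromBlocks A B Bᵀ C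
        = ((fromBlocks A B Bᵀ C)ᵀ *
          (fromBlocks (P + P * B * Q * Bᵀ * P) (-(P * B * Q)) (-(Q * Bᵀ * P)) Q)ᵀ)ᵀ := by
          rw [← transpose_mul, transpose_transpose]
    _ = (fromBlocks (A * P) 0 0 (S * Q))ᵀ := by rw [hHs, hMs, hHM]
    _ = fromBlocks (A * P) 0 0 (S * Q) := by
          rw [fromBlocks_transpose, p3, q3, transpose_zero, transpose_zero]
  refine ⟨?_, ?_, ?_, ?_⟩
  · rw [hHM, fromBlocks_multiply]
    have e22 : S * Q * C = C := by
      rw [hC']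
      simp only [Matrix.mul_add, ← Matrix.mul_assoc, g6, g9]
    simp only [Matrix.zero_mul, Matrix.mul_zero, add_zero, zero_add, g1, g4, g9, e22]
  · rw [hMH, fromBlocks_multiply]
    have f11 : A * P * (P + P * B * Q * Bᵀ * P) = P + P * B * Q * Bᵀ * P := by
      rw [cP]
      simp only [Matrix.mul_add, ← Matrix.mul_assoc, g2]
    have f12 : A * P * -(P * B * Q) = -(P * B * Q) := by
      rw [cP]
      simp only [Matrix.mul_neg, ← Matrix.mul_assoc, g2]
    have f21 : S * Q * -(Q * Bᵀ * P) = -(Q * Bᵀ * P) := by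
      rw [cQ]
      simp only [Matrix.mul_neg, ← Matrix.mul_assoc, g7]
    have f22 : S * Q * Q = Q := by rw [cQ]; exact g7
    simp only [Matrix.zero_mul, Matrix.mul_zero, add_zero, zero_add, f11, f12, f21, f22]
  · rw [hHM, fromBlocks_transpose, p3, q3, transpose_zero, transpose_zero]
  · rw [hMH, fromBlocks_transpose, p3, q3, transpose_zero, transpose_zero]

end Aux

theorem stmt_7 {N nμ nku : ℕ}
    (Jμ : Matrix (Fin N) (Fin nμ) ℝ) (Jku : Matrix (Fin N) (Fin nku) ℝ)
    (r : Fin N → ℝ)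
    -- rank condition: rank(Jμ) + rank(Jku) = rank(J)
    (hrank : Jμ.rank + Jku.rank = (fromCols Jμ Jku).rank)
    -- H⁺, the Moore–Penrose pseudo-inverse of H = JᵀJ
    (Hp : Matrix (Fin nμ ⊕ Fin nku) (Fin nμ ⊕ Fin nku) ℝ)
    (hHp : IsMoorePenrose ((fromCols Jμ Jku)ᵀ * fromCols Jμ Jku) Hp)
    -- H_{μμ}⁺, the Moore–Penrose pseudo-inverse of H_{μμ} = JμᵀJμ
    (Pμ : Matrix (Fin nμ) (Fin nμ) ℝ) (hPμ : IsMoorePenrose (Jμᵀ * Jμ) Pμ)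
    -- S⁺, the Moore–Penrose pseudo-inverse of the generalized Schur complement S
    (PS : Matrix (Fin nku) (Fin nku) ℝ)
    (hPS : IsMoorePenrose (Jkuᵀ * Jku - Jkuᵀ * Jμ * Pμ * (Jμᵀ * Jku)) PS) :
    ∀ j, (-(Hp *ᵥ ((fromCols Jμ Jku)ᵀ *ᵥ r))) (Sum.inr j) =
      (-(PS *ᵥ (Jkuᵀ *ᵥ r - (Jkuᵀ * Jμ) *ᵥ (Pμ *ᵥ (Jμᵀ *ᵥ r))))) j := by
  classical
  have hA : (Jμᵀ * Jμ)ᵀ = Jμᵀ * Jμ := by rw [transpose_mul, transpose_transpose]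
  have hPs : Pμᵀ = Pμ := mp_symm hA hPμ
  have hBt : Jkuᵀ * Jμ = (Jμᵀ * Jku)ᵀ := by rw [transpose_mul, transpose_transpose]
  have hC : (Jkuᵀ * Jku)ᵀ = Jkuᵀ * Jku := by rw [transpose_mul, transpose_transpose]
  have hSym : (Jkuᵀ * Jku - Jkuᵀ * Jμ * Pμ * (Jμᵀ * Jku))ᵀ
      = Jkuᵀ * Jku - Jkuᵀ * Jμ * Pμ * (Jμᵀ * Jku) := by
    simp only [transpose_sub, transpose_mul, transpose_transpose, hPs, Matrix.mul_assoc]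
  have hQs : PSᵀ = PS := mp_symm hSym hPS
  have hS' : Jkuᵀ * Jku - Jkuᵀ * Jμ * Pμ * (Jμᵀ * Jku)
      = Jkuᵀ * Jku - (Jμᵀ * Jku)ᵀ * Pμ * (Jμᵀ * Jku) := by rw [hBt]
  -- key identities from the pseudo-inverse of Jμᵀ Jμ
  have k1 : Jμ * (Pμ * (Jμᵀ * Jμ)) = Jμ := key1 Jμ Pμ hPμ
  have k1' : Jμ * Pμ * Jμᵀ * Jμ = Jμ := by
    rw [Matrix.mul_assoc, Matrix.mul_assoc]; exact k1
  have hE2 : Jμᵀ * Jμ * Pμ * Jμᵀ = Jμᵀ := by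
    have h := congrArg Matrix.transpose k1
    rwa [transpose_mul, transpose_mul, hA, hPs] at h
  have g4 : Jμᵀ * Jμ * Pμ * (Jμᵀ * Jku) = Jμᵀ * Jku := by
    rw [← Matrix.mul_assoc, hE2]
  -- the projected matrix K = (1 - Jμ Pμ Jμᵀ) Jku
  have hXX : Jμ * Pμ * Jμᵀ * (Jμ * Pμ * Jμᵀ) = Jμ * Pμ * Jμᵀ := by
    simp only [← Matrix.mul_assoc]; rw [k1']
  have hJXX : Jkuᵀ * Jμ * Pμ * Jμᵀ * Jμ * Pμ * Jμᵀ = Jkuᵀ * Jμ * Pμ * Jμᵀ := by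
    have h := congrArg (fun Y => Jkuᵀ * Y) hXX
    simpa only [← Matrix.mul_assoc] using h
  have hKS : (Jku - Jμ * Pμ * Jμᵀ * Jku)ᵀ * (Jku - Jμ * Pμ * Jμᵀ * Jku)
      = Jkuᵀ * Jku - Jkuᵀ * Jμ * Pμ * (Jμᵀ * Jku) := by
    simp only [transpose_sub, transpose_mul, transpose_transpose, hPs,
      Matrix.sub_mul, Matrix.mul_sub, ← Matrix.mul_assoc, hJXX]
    abel
  have hPS' : IsMoorePenrose
      ((Jku - Jμ * Pμ * Jμᵀ * Jku)ᵀ * (Jku - Jμ * Pμ * Jμᵀ * Jku)) PS := by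
    rw [hKS]; exact hPS
  have k2 := key1 (Jku - Jμ * Pμ * Jμᵀ * Jku) PS hPS'
  rw [hKS] at k2
  -- k2 : (Jku - Jμ Pμ Jμᵀ Jku) * (PS * S) = Jku - Jμ Pμ Jμᵀ Jku
  rw [Matrix.sub_mul] at k2
  have hD : Jku * (PS * (Jkuᵀ * Jku - Jkuᵀ * Jμ * Pμ * (Jμᵀ * Jku))) - Jku
      = Jμ * Pμ * Jμᵀ * Jku * (PS * (Jkuᵀ * Jku - Jkuᵀ * Jμ * Pμ * (Jμᵀ * Jku)))
        - Jμ * Pμ * Jμᵀ * Jku := sub_eq_sub_iff_sub_eq_sub.mp k2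
  have hfact : Jμ * Pμ * Jμᵀ * Jku * (PS * (Jkuᵀ * Jku - Jkuᵀ * Jμ * Pμ * (Jμᵀ * Jku)))
        - Jμ * Pμ * Jμᵀ * Jku
      = Jμ * (Pμ * (Jμᵀ * (Jku * (PS * (Jkuᵀ * Jku - Jkuᵀ * Jμ * Pμ * (Jμᵀ * Jku)))))
        - Pμ * (Jμᵀ * Jku)) := by
    simp only [Matrix.mul_sub, Matrix.mul_assoc]
  have hdisj := disjoint_ranges Jμ Jku hrank
  have hDcol : ∀ x : Fin nku → ℝ,
      (Jku * (PS * (Jkuᵀ * Jku - Jkuᵀ * Jμ * Pμ * (Jμᵀ * Jku))) - Jku) *ᵥ x = 0 := by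
    intro x
    have e1 : (Jku * (PS * (Jkuᵀ * Jku - Jkuᵀ * Jμ * Pμ * (Jμᵀ * Jku))) - Jku) *ᵥ x
        = Jμ *ᵥ ((Pμ * (Jμᵀ * (Jku * (PS * (Jkuᵀ * Jku - Jkuᵀ * Jμ * Pμ * (Jμᵀ * Jku)))))
          - Pμ * (Jμᵀ * Jku)) *ᵥ x) := by
      rw [hD, hfact, mulVec_mulVec]
    have e2 : (Jku * (PS * (Jkuᵀ * Jku - Jkuᵀ * Jμ * Pμ * (Jμᵀ * Jku))) - Jku) *ᵥ x
        = Jku *ᵥ ((PS * (Jkuᵀ * Jku - Jkuᵀ * Jμ * Pμ * (Jμᵀ * Jku)) - 1) *ᵥ x) := by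
      have hms : Jku * (PS * (Jkuᵀ * Jku - Jkuᵀ * Jμ * Pμ * (Jμᵀ * Jku))) - Jku
          = Jku * (PS * (Jkuᵀ * Jku - Jkuᵀ * Jμ * Pμ * (Jμᵀ * Jku)) - 1) := by
        rw [Matrix.mul_sub Jku, Matrix.mul_one]
      rw [mulVec_mulVec, ← hms]
    exact hdisj _ ⟨_, by rw [Matrix.mulVecLin_apply]; exact e1.symm⟩
      ⟨_, by rw [Matrix.mulVecLin_apply]; exact e2.symm⟩
  have hD0 : Jku * (PS * (Jkuᵀ * Jku - Jkuᵀ * Jμ * Pμ * (Jμᵀ * Jku))) - Jku = 0 := by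
    ext i j
    have h := congrFun (hDcol (Pi.single j 1)) i
    rw [mulVec_single_one] at h
    simpa using h
  have hL2 : Jku * (PS * (Jkuᵀ * Jku - Jkuᵀ * Jμ * Pμ * (Jμᵀ * Jku))) = Jku :=
    sub_eq_zero.mp hD0
  have g8 : (Jμᵀ * Jku) * PS * (Jkuᵀ * Jku - Jkuᵀ * Jμ * Pμ * (Jμᵀ * Jku))
      = Jμᵀ * Jku := by
    calc (Jμᵀ * Jku) * PS * (Jkuᵀ * Jku - Jkuᵀ * Jμ * Pμ * (Jμᵀ * Jku))
        = Jμᵀ * (Jku * (PS * (Jkuᵀ * Jku - Jkuᵀ * Jμ * Pμ * (Jμᵀ * Jku)))) := by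
          simp only [Matrix.mul_assoc]
    _ = Jμᵀ * Jku := by rw [hL2]
  have g9 : (Jkuᵀ * Jku - Jkuᵀ * Jμ * Pμ * (Jμᵀ * Jku)) * PS * (Jμᵀ * Jku)ᵀ
      = (Jμᵀ * Jku)ᵀ := by
    have h := congrArg Matrix.transpose g8
    rwa [transpose_mul, transpose_mul, hQs, hSym, ← Matrix.mul_assoc] at h
  have hMP := blockMP (Jμᵀ * Jμ) (Jμᵀ * Jku) (Jkuᵀ * Jku) Pμ PS
    (Jkuᵀ * Jku - Jkuᵀ * Jμ * Pμ * (Jμᵀ * Jku)) hA hC hPs hQs hS'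
    hPμ.1 hPμ.2.1 hPμ.2.2.1 g4 hPS.1 hPS.2.1 hPS.2.2.1 g9
  have hHfrom : (fromCols Jμ Jku)ᵀ * fromCols Jμ Jku
      = fromBlocks (Jμᵀ * Jμ) (Jμᵀ * Jku) (Jμᵀ * Jku)ᵀ (Jkuᵀ * Jku) := by
    rw [transpose_fromCols, fromRows_mul_fromCols, hBt]
  rw [hHfrom] at hHp
  have hHpM := mp_unique hHp hMP
  intro j
  rw [hHpM, transpose_fromCols, fromRows_mulVec, fromBlocks_mulVec]
  simp only [Sum.elim_comp_inl, Sum.elim_comp_inr, Pi.neg_apply, Sum.elim_inr,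
    Pi.add_apply, Pi.sub_apply, neg_mulVec, mulVec_sub, hBt, ← mulVec_mulVec]
  ring
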